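/- arXiv:2605.24727 — 3 statements merged into one kernel-verified Lean document; each statement's English description precedes it below -/
import Mathlib

section
/- Prefix-free complexity is bounded by plain complexity up to a logarithmic term: Fix a universal conditional function U and a universal conditional prefix-free function V over the same alphabet Σ and self-delimiting encoding. Then there exists a constant c ∈ ℕ, independent of x and y, such that for every x, y ∈ Σ*: K_V(y∣x) ≤ C_U(y∣x) + 2·log_{|Σ|}(C_U(y∣x) + 1) + c. -/
open scoped Classical ENNReal NNReal

namespace Quad

/-- A set of strings is prefix-free: none of its elements is a proper prefix of another. -/
def PrefixFree {β : Type*} (S : Set (List β)) : Prop :=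
  ∀ a ∈ S, ∀ b ∈ S, a <+: b → a = b

/-- A computable (decidable) set of strings. -/
def CompSet {α : Type} [Primcodable α] (S : Set (List α)) : Prop :=
  ComputablePred (· ∈ S)

/-- A self-delimiting encoding on Σ*. -/
structure SelfDelim (α : Type) [Primcodable α] where
  enc : List α → List α
  comp : Computable enc
  inj : Function.Injective enc
  img_comp : CompSet (Set.range enc)
  img_pf : PrefixFree (Set.range enc)

/-- A universal conditional partial computable function. -/
structure UnivCond {α : Type} [Primcodable α] (sd : SelfDelim α) where
  U : List α →. List α
  partrec : Partrec U
  progs : Set (List α)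
  progs_comp : CompSet progs
  progs_pf : PrefixFree progs
  univ : ∀ f : List α →. List α, Partrec f →
    ∃ p ∈ progs, ∀ x w : List α, U (sd.enc x ++ p ++ w) = f (sd.enc x ++ w)

/-- Conditional plain Kolmogorov complexity `C_U(y∣x)`. -/
noncomputable def CU {α : Type} [Primcodable α] {sd : SelfDelim α} (U : UnivCond sd)
    (y x : List α) : ℕ :=
  sInf {m | ∃ p : List α, p.length = m ∧ U.U (sd.enc x ++ p) = Part.some y}

/-- A conditional prefix-free partial computable function. -/
def CondPF {α : Type} [Primcodable α] (sd : SelfDelim α) (g : List α →. List α) : Prop :=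
  ∀ x : List α, PrefixFree {w : List α | (g (sd.enc x ++ w)).Dom}

/-- A universal conditional prefix-free function. -/
structure UnivCondPF {α : Type} [Primcodable α] (sd : SelfDelim α) where
  V : List α →. List α
  partrec : Partrec V
  condPF : CondPF sd V
  progs : Set (List α)
  progs_comp : CompSet progs
  progs_pf : PrefixFree progs
  univ : ∀ g : List α →. List α, Partrec g → CondPF sd g →
    ∃ p ∈ progs, ∀ x w : List α, V (sd.enc x ++ p ++ w) = g (sd.enc x ++ w)

/-- Conditional prefix-free Kolmogorov complexity `K_V(y∣x)`. -/
noncomputable def KV {α : Type} [Primcodable α] {sd : SelfDelim α} (V : UnivCondPF sd)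
    (y x : List α) : ℕ :=
  sInf {m | ∃ p : List α, p.length = m ∧ V.V (sd.enc x ++ p) = Part.some y}

/-- A fixed injective encoding of a countable set into Σ* with computable image. -/
structure GoodEnc (α : Type) [Primcodable α] (X : Type) where
  enc : X → List α
  inj : Function.Injective enc
  img_comp : CompSet (Set.range enc)

/-- A real-valued function on a countable set is computable if a computable rational
function approximates it to arbitrary precision `b^(-k)`. -/
def ComputableRealFun {Z : Type} [Primcodable Z] (b : ℕ) (f : Z → ℝ) : Prop :=
  ∃ g : ℕ → Z → ℚ, Computable₂ g ∧ ∀ (k : ℕ) (z : Z), |(g k z : ℝ) - f z| ≤ (b : ℝ) ^ (-(k : ℤ))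

/-- A computable conditional probability mass function `Q(y∣x) = Q x y`. -/
def IsCondPMF {X Y : Type} [Primcodable X] [Primcodable Y] (b : ℕ) (Q : X → Y → ℝ) : Prop :=
  (∀ x y, 0 ≤ Q x y) ∧ (∀ x y, Q x y ≤ 1) ∧ (∀ x, HasSum (fun y => Q x y) 1) ∧
    ComputableRealFun b (fun z : X × Y => Q z.1 z.2)

/-- `e` is a completely faithful explanation of `f` under the interpretation function. -/
def Faithful {Λ Z : Type} [Primcodable Λ] [Primcodable Z]
    (b : ℕ) (Interp : List Λ × ℕ × Z →. ℚ) (f : Z → ℝ) (e : List Λ) : Prop :=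
  ∀ (z : Z) (k : ℕ), ∃ r : ℚ, Interp (e, k, z) = Part.some r ∧
    |(r : ℝ) - f z| < (b : ℝ) ^ (-(k : ℤ))

/-- `−log_b t`, with `−log 0 := +∞`, valued in extended reals. -/
noncomputable def negLog (b : ℕ) (t : ℝ) : EReal :=
  if t ≤ 0 then ⊤ else ((-(Real.logb (b : ℝ) t) : ℝ) : EReal)

/-- `−log_b t`, with `−log 0 := +∞`, valued in `ℝ≥0∞`. -/
noncomputable def negLogE (b : ℕ) (t : ℝ) : ℝ≥0∞ :=
  if t ≤ 0 then ⊤ else ENNReal.ofReal (-(Real.logb (b : ℝ) t))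

/-- Maximal code length of a character encoding. -/
def LLen {α Λ : Type} [Fintype Λ] (encΛ : Λ → List α) : ℕ :=
  Finset.univ.sup fun a => (encΛ a).length

/-- `p` is a program for `U` computing arbitrary-precision approximations of the
real-valued function `f`, conditioned on the code `xcode`. -/
def IsApproxProgC {α Z : Type} [Primcodable α] {sd : SelfDelim α} (U : UnivCond sd)
    (encZ : Z → List α) (encN : ℕ → List α) (encQ : ℚ → List α) (b : ℕ)
    (f : Z → ℝ) (xcode : List α) (p : List α) : Prop :=
  ∀ (z : Z) (k : ℕ), ∃ r : ℚ,
    U.U (sd.enc (encZ z) ++ sd.enc (encN k) ++ sd.enc xcode ++ p) = Part.some (encQ r) ∧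
    |(r : ℝ) - f z| ≤ (b : ℝ) ^ (-(k : ℤ))

/-- Conditional plain Kolmogorov complexity `C_U(f∣x)` of a real-valued function. -/
noncomputable def CUFun {α Z : Type} [Primcodable α] {sd : SelfDelim α} (U : UnivCond sd)
    (encZ : Z → List α) (encN : ℕ → List α) (encQ : ℚ → List α) (b : ℕ)
    (f : Z → ℝ) (xcode : List α) : ℕ :=
  sInf {m | ∃ p : List α, p.length = m ∧ IsApproxProgC U encZ encN encQ b f xcode p}

/-- `p` is a program for `U` computing arbitrary-precision approximations of `f`. -/
def IsApproxProg {α Z : Type} [Primcodable α] {sd : SelfDelim α} (U : UnivCond sd)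
    (encZ : Z → List α) (encN : ℕ → List α) (encQ : ℚ → List α) (b : ℕ)
    (f : Z → ℝ) (p : List α) : Prop :=
  ∀ (z : Z) (k : ℕ), ∃ r : ℚ,
    U.U (sd.enc (encZ z) ++ sd.enc (encN k) ++ p) = Part.some (encQ r) ∧
    |(r : ℝ) - f z| ≤ (b : ℝ) ^ (-(k : ℤ))

/-- Unconditional plain Kolmogorov complexity `C_U(f)` of a real-valued function. -/
noncomputable def CUFun0 {α Z : Type} [Primcodable α] {sd : SelfDelim α} (U : UnivCond sd)
    (encZ : Z → List α) (encN : ℕ → List α) (encQ : ℚ → List α) (b : ℕ)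
    (f : Z → ℝ) : ℕ :=
  sInf {m | ∃ p : List α, p.length = m ∧ IsApproxProg U encZ encN encQ b f p}

/-- `p ∈ PFPrograms_V(f∣x)`. -/
def IsPFApproxProg {α Z : Type} [Primcodable α] {sd : SelfDelim α} (V : UnivCondPF sd)
    (encZ : Z → List α) (encN : ℕ → List α) (encQ : ℚ → List α) (b : ℕ)
    (f : Z → ℝ) (xcode : List α) (p : List α) : Prop :=
  ∀ (z : Z) (k : ℕ), ∃ r : ℚ,
    V.V (sd.enc (encZ z) ++ sd.enc (encN k) ++ sd.enc xcode ++ p) = Part.some (encQ r) ∧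
    |(r : ℝ) - f z| ≤ (b : ℝ) ^ (-(k : ℤ))

/-- Conditional prefix-free Kolmogorov complexity `K_V(f∣x)` of a real-valued function. -/
noncomputable def KVFun {α Z : Type} [Primcodable α] {sd : SelfDelim α} (V : UnivCondPF sd)
    (encZ : Z → List α) (encN : ℕ → List α) (encQ : ℚ → List α) (b : ℕ)
    (f : Z → ℝ) (xcode : List α) : ℕ :=
  sInf {m | ∃ p : List α, p.length = m ∧ IsPFApproxProg V encZ encN encQ b f xcode p}



section PFAux

open Primrec List

/-- Automaton step reading a doubled-digit self-delimiting code. -/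
def pfStep (s : ℕ × List ℕ × ℕ) (d : ℕ) : ℕ × List ℕ × ℕ :=
  if s.1 = 1 ∨ s.1 = 2 then s
  else if s.1 = 0 then (d + 3, s.2.1, s.2.2 + 1)
  else if s.1 = d + 3 then (0, s.2.1 ++ [d], s.2.2 + 1)
  else if s.1 = 3 ∧ d = 1 then (1, s.2.1, s.2.2 + 1)
  else (2, s.2.1, s.2.2 + 1)

def pfRun (l : List ℕ) : ℕ × List ℕ × ℕ := l.foldl pfStep (0, [], 0)

def pfParse (b : ℕ) (l : List ℕ) : Option (ℕ × ℕ) :=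
  if (pfRun l).1 = 1 then some (Nat.ofDigits b (pfRun l).2.1, (pfRun l).2.2) else none

def pfDbl : List ℕ → List ℕ
  | [] => []
  | d :: l => d :: d :: pfDbl l

def pfCode (b n : ℕ) : List ℕ := pfDbl (Nat.digits b n) ++ [0, 1]

lemma pfDbl_length (l : List ℕ) : (pfDbl l).length = 2 * l.length := by
  induction l with
  | nil => simp [pfDbl]
  | cons d l ih => simp [pfDbl, ih]; omega

lemma mem_pfDbl {a : ℕ} {l : List ℕ} : a ∈ pfDbl l ↔ a ∈ l := by
  induction l with
  | nil => simp [pfDbl]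
  | cons d l ih => simp [pfDbl, ih]

lemma pfStep_done (acc : List ℕ) (t d : ℕ) : pfStep (1, acc, t) d = (1, acc, t) := by
  simp [pfStep]

lemma pfStep_zero (acc : List ℕ) (t d : ℕ) : pfStep (0, acc, t) d = (d + 3, acc, t + 1) := by
  simp [pfStep]

lemma pfStep_pend (acc : List ℕ) (t d : ℕ) :
    pfStep (d + 3, acc, t) d = (0, acc ++ [d], t + 1) := by
  simp only [pfStep]
  rw [if_neg (by omega), if_neg (by omega)]
  simp

lemma pfStep_marker (acc : List ℕ) (t : ℕ) : pfStep (3, acc, t) 1 = (1, acc, t + 1) := by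
  simp only [pfStep]
  rw [if_neg (by omega), if_neg (by omega), if_neg (by omega)]
  simp

lemma pfFoldl_done (l : List ℕ) (acc : List ℕ) (t : ℕ) :
    l.foldl pfStep (1, acc, t) = (1, acc, t) := by
  induction l with
  | nil => rfl
  | cons d l ih => simp [List.foldl_cons, pfStep_done, ih]

lemma pfFoldl_dbl (l : List ℕ) : ∀ (acc : List ℕ) (t : ℕ) (r : List ℕ),
    (pfDbl l ++ r).foldl pfStep (0, acc, t) = r.foldl pfStep (0, acc ++ l, t + 2 * l.length) := by
  induction l with
  | nil => intro acc t r; simp [pfDbl]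
  | cons d l ih =>
    intro acc t r
    have : pfDbl (d :: l) ++ r = d :: d :: (pfDbl l ++ r) := by simp [pfDbl]
    rw [this]
    simp only [List.foldl_cons, pfStep_zero, pfStep_pend]
    rw [ih]
    simp only [List.length_cons]
    have h1 : acc ++ [d] ++ l = acc ++ (d :: l) := by simp
    have h2 : t + 1 + 1 + 2 * l.length = t + 2 * (l.length + 1) := by omega
    rw [h1, h2]

lemma pfRun_code (b n : ℕ) (r : List ℕ) :
    (pfCode b n ++ r).foldl pfStep (0, [], 0) =
      (1, Nat.digits b n, 2 * (Nat.digits b n).length + 2) := by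
  have : pfCode b n ++ r = pfDbl (Nat.digits b n) ++ (0 :: 1 :: r) := by
    simp [pfCode]
  rw [this, pfFoldl_dbl]
  simp only [List.foldl_cons, pfStep_zero, Nat.zero_add, List.nil_append, pfStep_marker]
  rw [pfFoldl_done]

lemma pfParse_code (b n : ℕ) (r : List ℕ) :
    pfParse b (pfCode b n ++ r) = some (n, (pfCode b n).length) := by
  have hlen : (pfCode b n).length = 2 * (Nat.digits b n).length + 2 := by
    simp [pfCode, pfDbl_length]
  rw [pfParse, pfRun, pfRun_code, hlen]
  simp [Nat.ofDigits_digits]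

lemma pfParse_extend (b : ℕ) {l : List ℕ} {nt : ℕ × ℕ}
    (h : pfParse b l = some nt) (r : List ℕ) : pfParse b (l ++ r) = some nt := by
  by_cases h1 : (pfRun l).1 = 1
  · have hrun : pfRun (l ++ r) = pfRun l := by
      rw [pfRun, List.foldl_append]
      have : pfRun l = (1, (pfRun l).2.1, (pfRun l).2.2) := by
        rw [← h1]
      rw [pfRun] at this ⊢
      rw [this, pfFoldl_done]
    rw [pfParse, hrun, if_pos h1, ← h]
    rw [pfParse, if_pos h1]
  · rw [pfParse, if_neg h1] at h; exact absurd h (by simp)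

end PFAux

section PFPrim

open Primrec

lemma primrec_pfStep : Primrec₂ pfStep := by
  have hm : Primrec fun p : (ℕ × List ℕ × ℕ) × ℕ => p.1.1 := fst.comp fst
  have hacc : Primrec fun p : (ℕ × List ℕ × ℕ) × ℕ => p.1.2.1 := fst.comp (snd.comp fst)
  have ht : Primrec fun p : (ℕ × List ℕ × ℕ) × ℕ => p.1.2.2 := snd.comp (snd.comp fst)
  have hd : Primrec fun p : (ℕ × List ℕ × ℕ) × ℕ => p.2 := snd
  have hts : Primrec fun p : (ℕ × List ℕ × ℕ) × ℕ => p.1.2.2 + 1 := succ.comp ht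
  have c1 : PrimrecPred fun p : (ℕ × List ℕ × ℕ) × ℕ => p.1.1 = 1 ∨ p.1.1 = 2 :=
    PrimrecPred.or (PrimrecRel.comp Primrec.eq hm (const 1))
      (PrimrecRel.comp Primrec.eq hm (const 2))
  have c2 : PrimrecPred fun p : (ℕ × List ℕ × ℕ) × ℕ => p.1.1 = 0 :=
    PrimrecRel.comp Primrec.eq hm (const 0)
  have c3 : PrimrecPred fun p : (ℕ × List ℕ × ℕ) × ℕ => p.1.1 = p.2 + 3 :=
    PrimrecRel.comp Primrec.eq hm (nat_add.comp hd (const 3))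
  have c4 : PrimrecPred fun p : (ℕ × List ℕ × ℕ) × ℕ => p.1.1 = 3 ∧ p.2 = 1 :=
    PrimrecPred.and (PrimrecRel.comp Primrec.eq hm (const 3))
      (PrimrecRel.comp Primrec.eq hd (const 1))
  exact Primrec.ite c1 fst
    (Primrec.ite c2 (Primrec.pair (nat_add.comp hd (const 3)) (Primrec.pair hacc hts))
      (Primrec.ite c3 (Primrec.pair (const 0) (Primrec.pair (list_concat.comp hacc hd) hts))
        (Primrec.ite c4 (Primrec.pair (const 1) (Primrec.pair hacc hts))
          (Primrec.pair (const 2) (Primrec.pair hacc hts)))))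

lemma primrec_pfRun : Primrec pfRun := by
  have h := Primrec.list_foldl (f := @id (List ℕ))
    (g := fun _ => ((0 : ℕ), ([] : List ℕ), (0 : ℕ)))
    (h := fun _ p => pfStep p.1 p.2) Primrec.id (const _)
    (primrec_pfStep.comp (fst.comp snd) (snd.comp snd))
  exact h.of_eq fun l => rfl

lemma ofDigits_eq_foldr (b : ℕ) (l : List ℕ) :
    Nat.ofDigits b l = l.foldr (fun d r => d + b * r) 0 := by
  induction l with
  | nil => simp
  | cons d l ih => rw [Nat.ofDigits_cons, ih]; rfl

lemma primrec_ofDigits (b : ℕ) : Primrec fun l : List ℕ => Nat.ofDigits b l := by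
  have h := Primrec.list_foldr (f := @id (List ℕ)) (g := fun _ => (0 : ℕ))
    (h := fun _ p => p.1 + b * p.2) Primrec.id (const 0)
    (nat_add.comp (fst.comp snd) (nat_mul.comp (const b) (snd.comp snd)))
  exact h.of_eq fun l => (ofDigits_eq_foldr b l).symm

lemma primrec_pfParse (b : ℕ) : Primrec (pfParse b) := by
  unfold pfParse
  exact Primrec.ite (PrimrecRel.comp Primrec.eq (fst.comp primrec_pfRun) (const 1))
    (option_some.comp (Primrec.pair
      ((primrec_ofDigits b).comp (fst.comp (snd.comp primrec_pfRun)))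
      (snd.comp (snd.comp primrec_pfRun))))
    (const none)

lemma iterate_tail_eq_drop {γ : Type*} (n : ℕ) :
    ∀ l : List γ, (fun l : List γ => l.tail)^[n] l = l.drop n := by
  induction n with
  | zero => intro l; simp
  | succ n ih => intro l; rw [Function.iterate_succ_apply', ih, List.tail_drop]

lemma primrec_drop {β : Type} [Primcodable β] :
    Primrec₂ fun (l : List β) (n : ℕ) => l.drop n := by
  have h := Primrec.nat_iterate (f := fun p : List β × ℕ => p.2)
    (g := fun p : List β × ℕ => p.1) (h := fun _ l => l.tail)
    snd fst (Primrec.list_tail.comp snd).to₂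
  exact h.of_eq fun p => iterate_tail_eq_drop p.2 p.1

lemma primrec_take {β : Type} [Primcodable β] :
    Primrec₂ fun (l : List β) (n : ℕ) => l.take n := by
  have h : Primrec fun p : List β × ℕ => (p.1.reverse.drop (p.1.length - p.2)).reverse :=
    list_reverse.comp (primrec_drop.comp (list_reverse.comp fst)
      (nat_sub.comp (list_length.comp fst) snd))
  refine h.of_eq fun p => ?_
  rw [List.drop_reverse, List.reverse_reverse]
  rcases le_total p.2 p.1.length with hle | hle
  · congr 1; omega
  · have h1 : p.1.length - (p.1.length - p.2) = p.1.length := by omega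
    rw [h1, List.take_length]
    exact (List.take_of_length_le hle).symm

end PFPrim

section PFMap

open Primrec

variable {α : Type} [Primcodable α] [Fintype α] [DecidableEq α]

set_option linter.unusedSectionVars false

noncomputable def pfLst (α : Type) [Fintype α] : List α := Finset.univ.toList

noncomputable def pfDig (a : α) : ℕ := (pfLst α).idxOf a

lemma pfLst_length : (pfLst α).length = Fintype.card α := by
  simp [pfLst, Finset.length_toList]

lemma pfLst_nodup : (pfLst α).Nodup := Finset.nodup_toList _

noncomputable def pfSym (h : pfLst α ≠ []) (d : ℕ) : α := (pfLst α).getD d ((pfLst α).head h)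

lemma pfDig_pfSym (h : pfLst α ≠ []) {d : ℕ} (hd : d < (pfLst α).length) :
    pfDig (pfSym h d) = d := by
  unfold pfDig pfSym
  rw [List.getD_eq_getElem _ _ hd]
  exact List.Nodup.idxOf_getElem pfLst_nodup d hd

noncomputable def pfPost (b : ℕ) (v : List α) (i : ℕ) : Option (List α) :=
  (pfParse b ((v.drop i).map pfDig)).bind fun nt =>
    if (v.drop i).length = nt.2 + nt.1 then some (v.take i ++ (v.drop i).drop nt.2) else none

lemma primrec_pfPost (b : ℕ) : Primrec₂ (pfPost (α := α) b) := by
  have hdropv : Primrec fun p : List α × ℕ => p.1.drop p.2 := primrec_drop.comp fst snd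
  have htakev : Primrec fun p : List α × ℕ => p.1.take p.2 := primrec_take.comp fst snd
  have hparse : Primrec fun p : List α × ℕ => pfParse b ((p.1.drop p.2).map pfDig) :=
    (primrec_pfParse b).comp
      (Primrec.list_map hdropv ((Primrec.list_idxOf₁ (pfLst α)).comp snd).to₂)
  have hdrop2 : Primrec fun q : (List α × ℕ) × (ℕ × ℕ) => q.1.1.drop q.1.2 :=
    primrec_drop.comp (fst.comp fst) (snd.comp fst)
  have htake2 : Primrec fun q : (List α × ℕ) × (ℕ × ℕ) => q.1.1.take q.1.2 :=
    primrec_take.comp (fst.comp fst) (snd.comp fst)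
  exact Primrec.option_bind hparse
    (Primrec.ite
      (PrimrecRel.comp Primrec.eq (list_length.comp hdrop2)
        (nat_add.comp (snd.comp snd) (fst.comp snd)))
      (option_some.comp (list_append.comp htake2
        (primrec_drop.comp hdrop2 (snd.comp snd))))
      (const none))

noncomputable def pfG (χ : List α → Bool) (UU : List α →. List α) (b : ℕ) : List α →. List α :=
  fun v => (Nat.rfind fun i => Part.some (χ (v.take i))).bind fun i =>
    (Part.ofOption (pfPost b v i)).bind UU

theorem partrec_pfG {χ : List α → Bool} {UU : List α →. List α}
    (hχ : Computable χ) (hU : Partrec UU) (b : ℕ) : Partrec (pfG χ UU b) := by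
  have htake : Computable fun p : List α × ℕ => p.1.take p.2 :=
    Primrec.to_comp (primrec_take.comp Primrec.fst Primrec.snd)
  have h1 : Computable fun p : List α × ℕ => χ (p.1.take p.2) := hχ.comp htake
  have h2 : Partrec fun v : List α => Nat.rfind fun i => Part.some (χ (v.take i)) :=
    Partrec.rfind h1.partrec
  have h3 : Computable fun p : List α × ℕ => pfPost b p.1 p.2 :=
    Primrec.to_comp (primrec_pfPost b)
  have h4 : Partrec fun p : List α × ℕ => (Part.ofOption (pfPost b p.1 p.2)).bind UU :=
    (Computable.ofOption h3).bind (hU.comp Computable.snd)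
  exact h2.bind h4

end PFMap


section PFMain

/-- **Prefix-free complexity is bounded by plain complexity up to a logarithmic term.** -/
theorem prefixFree_le_plain_add_log
    (α : Type) [Primcodable α] [Fintype α] (hα : 2 ≤ Fintype.card α)
    (sd : SelfDelim α) (U : UnivCond sd) (V : UnivCondPF sd) :
    ∃ c : ℕ, ∀ x y : List α,
      (KV V y x : ℝ) ≤ (CU U y x : ℝ)
        + 2 * Real.logb (Fintype.card α : ℝ) ((CU U y x : ℝ) + 1) + (c : ℝ) := by
  haveI : DecidableEq α := Encodable.decidableEqOfEncodable α
  have hb1 : 1 < Fintype.card α := hα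
  set b : ℕ := Fintype.card α with hbdef
  obtain ⟨χ, hχ, hχeq⟩ := ComputablePred.computable_iff.1 sd.img_comp
  have hχspec : ∀ l : List α, l ∈ Set.range sd.enc ↔ χ l = true := fun l =>
    iff_of_eq (congrFun hχeq l)
  have hLne : pfLst α ≠ [] := by
    intro h
    have h2 := pfLst_length (α := α)
    rw [h] at h2
    simp at h2
    omega
  have hrfind : ∀ (x w : List α),
      (Nat.rfind fun i => Part.some (χ ((sd.enc x ++ w).take i))) =
        Part.some (sd.enc x).length := by
    intro x w
    apply Part.eq_some_iff.2
    apply Nat.mem_rfind.2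
    constructor
    · apply Part.mem_some_iff.2
      have htk : (sd.enc x ++ w).take (sd.enc x).length = sd.enc x := by
        rw [List.take_append_of_le_length le_rfl, List.take_length]
      exact ((hχspec _).1 ⟨x, htk.symm⟩).symm
    · intro m hm
      apply Part.mem_some_iff.2
      rcases hb : χ ((sd.enc x ++ w).take m) with _ | _
      · rfl
      · exfalso
        obtain ⟨x', hx'⟩ := (hχspec _).2 hb
        have htk : (sd.enc x ++ w).take m = (sd.enc x).take m :=
          List.take_append_of_le_length (le_of_lt hm)
        have hpre : sd.enc x' <+: sd.enc x := by
          rw [hx', htk]; exact List.take_prefix _ _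
        have heq := sd.img_pf _ ⟨x', rfl⟩ _ ⟨x, rfl⟩ hpre
        have hlen := congrArg List.length heq
        rw [hx', htk, List.length_take] at hlen
        omega
  have hgev : ∀ (x w : List α), pfG χ U.U b (sd.enc x ++ w) =
      (Part.ofOption ((pfParse b (w.map pfDig)).bind fun nt =>
        if w.length = nt.2 + nt.1 then some (sd.enc x ++ w.drop nt.2) else none)).bind U.U := by
    intro x w
    have hdr : (sd.enc x ++ w).drop (sd.enc x).length = w := by
      rw [List.drop_append_of_le_length le_rfl, List.drop_length, List.nil_append]
    have htk : (sd.enc x ++ w).take (sd.enc x).length = sd.enc x := by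
      rw [List.take_append_of_le_length le_rfl, List.take_length]
    simp only [pfG]
    rw [hrfind x w, Part.bind_some]
    simp only [pfPost, hdr, htk]
  have hdom : ∀ (x w : List α), (pfG χ U.U b (sd.enc x ++ w)).Dom →
      ∃ nt : ℕ × ℕ, pfParse b (w.map pfDig) = some nt ∧ w.length = nt.2 + nt.1 := by
    intro x w hd
    rw [hgev] at hd
    rcases hpo : pfParse b (w.map pfDig) with _ | nt
    · rw [hpo] at hd
      simp [Part.ofOption] at hd
      exact hd.elim fun h _ => False.elim h
    · by_cases hc : w.length = nt.2 + nt.1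
      · exact ⟨nt, rfl, hc⟩
      · rw [hpo] at hd
        simp [hc, Part.ofOption] at hd
        exact hd.elim fun h _ => False.elim h
  have hgpf : CondPF sd (pfG χ U.U b) := by
    intro x w1 hw1 w2 hw2 hpre
    obtain ⟨nt1, h1, l1⟩ := hdom x w1 hw1
    obtain ⟨nt2, h2, l2⟩ := hdom x w2 hw2
    obtain ⟨s, rfl⟩ := hpre
    rw [List.map_append, pfParse_extend b h1] at h2
    have hnt : nt1 = nt2 := by injection h2
    subst hnt
    have hs : s.length = 0 := by
      rw [List.length_append] at l2
      omega
    rw [List.length_eq_zero_iff.1 hs, List.append_nil]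
  obtain ⟨q, hqmem, hquniv⟩ := V.univ (pfG χ U.U b) (partrec_pfG hχ U.partrec b) hgpf
  refine ⟨q.length + 4, fun x y => ?_⟩
  have hCUne : {m | ∃ p : List α, p.length = m ∧ U.U (sd.enc x ++ p) = Part.some y}.Nonempty := by
    obtain ⟨p₀, _, hp₀⟩ := U.univ (fun _ => Part.some y) (Partrec.const' _)
    refine ⟨p₀.length, p₀, rfl, ?_⟩
    simpa using hp₀ x []
  obtain ⟨p, hplen, hpU⟩ := Nat.sInf_mem hCUne
  set n := CU U y x with hndef
  have hpn : p.length = n := hplen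
  set cw : List α := (pfCode b n).map (pfSym hLne) ++ p with hcw
  have hcwlen_code : ((pfCode b n).map (pfSym hLne)).length = (pfCode b n).length := by
    simp
  have hmapdig : ((pfCode b n).map (pfSym hLne)).map pfDig = pfCode b n := by
    rw [List.map_map]
    have hpt : ∀ d ∈ pfCode b n, (pfDig ∘ pfSym hLne) d = d := by
      intro d hd
      apply pfDig_pfSym
      rw [pfLst_length]
      rcases List.mem_append.1 hd with h | h
      · exact Nat.digits_lt_base hb1 (mem_pfDbl.1 h)
      · simp at h
        rcases h with rfl | rfl <;> omega
    rw [List.map_congr_left hpt]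
    exact List.map_id _
  have hparse : pfParse b (cw.map pfDig) = some (n, (pfCode b n).length) := by
    rw [hcw, List.map_append, hmapdig]
    exact pfParse_code b n _
  have hdropcw : cw.drop (pfCode b n).length = p := by
    rw [hcw, ← hcwlen_code, List.drop_append_of_le_length le_rfl, List.drop_length,
      List.nil_append]
  have hcond : cw.length = (pfCode b n).length + n := by
    rw [hcw, List.length_append, hcwlen_code, hpn]
  have hVeq : V.V (sd.enc x ++ (q ++ cw)) = Part.some y := by
    have hu := hquniv x cw
    rw [List.append_assoc] at hu
    have hopt : ((pfParse b (cw.map pfDig)).bind fun nt =>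
        if cw.length = nt.2 + nt.1 then some (sd.enc x ++ cw.drop nt.2) else none) =
          some (sd.enc x ++ p) := by
      rw [hparse]
      simp [hcond, hdropcw]
    rw [hu, hgev x cw, hopt]
    have hof : Part.ofOption (some (sd.enc x ++ p)) = Part.some (sd.enc x ++ p) := rfl
    rw [hof]; refine (Part.bind_some _ (U.U : List α → Part (List α))).trans ?_
    exact hpU
  have hKV : KV V y x ≤ q.length + ((pfCode b n).length + n) := by
    apply Nat.sInf_le
    refine ⟨q ++ cw, ?_, hVeq⟩
    rw [List.length_append, hcond]
  have hL : ((Nat.digits b n).length : ℝ) ≤ Real.logb b ((n : ℝ) + 1) + 1 := by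
    rcases Nat.eq_zero_or_pos n with hn | hn
    · rw [hn]; simp
    · rw [Nat.digits_len b n hb1 hn.ne']
      have h1 : (Nat.log b n : ℝ) ≤ Real.logb b n := Real.natLog_le_logb n b
      have h2 : Real.logb b n ≤ Real.logb b ((n : ℝ) + 1) := by
        apply Real.logb_le_logb_of_le
        · exact_mod_cast hb1
        · exact_mod_cast hn
        · linarith
      push_cast
      linarith
  have hcode_len : ((pfCode b n).length : ℝ) = 2 * ((Nat.digits b n).length : ℝ) + 2 := by
    have : (pfCode b n).length = 2 * (Nat.digits b n).length + 2 := by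
      simp [pfCode, pfDbl_length]
    rw [this]
    push_cast
    ring
  have hKVr : (KV V y x : ℝ) ≤ (q.length : ℝ) + (((pfCode b n).length : ℝ) + (n : ℝ)) := by
    exact_mod_cast hKV
  push_cast
  rw [hcode_len] at hKVr
  linarith

end PFMain

end Quad
end

section
/- The expected conditional prefix-free complexity can exceed the conditional entropy by any amount: Fix a universal conditional prefix-free function V over the alphabet Σ. For every n ∈ ℕ there exists a probability mass function P on Σ* × Σ* such that E_{(X,Y)∼P}[K_V(Y∣X)] ≥ H_P(Y∣X) + n, where H_P(Y∣X) := E_{(X,Y)∼P}[−log_{|Σ|} P(Y∣X)] is the conditional Shannon entropy to base |Σ| (P(y∣x) denoting the conditional probability of Y = y given X = x under P). -/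
open scoped Classical ENNReal NNReal

namespace Quad

-- every y has some program
lemma exists_prog {α : Type} [Primcodable α] {sd : SelfDelim α} (V : UnivCondPF sd)
    (y x : List α) : ∃ p : List α, V.V (sd.enc x ++ p) = Part.some y := by
  obtain ⟨hd, hc⟩ := sd.img_comp
  set g : List α →. List α := fun u => cond (decide (u ∈ Set.range sd.enc)) (Part.some y) Part.none
    with hg
  have hgp : Partrec g := Partrec.cond hc (Computable.const y).partrec Partrec.none
  have key : ∀ x' w, (g (sd.enc x' ++ w)).Dom → w = [] := by
    intro x' w hw
    by_cases h : sd.enc x' ++ w ∈ Set.range sd.enc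
    · obtain ⟨x'', hx''⟩ := h
      have heq : sd.enc x' = sd.enc x'' :=
        sd.img_pf _ ⟨x', rfl⟩ _ ⟨x'', rfl⟩ ⟨w, hx''.symm⟩
      have : sd.enc x' ++ w = sd.enc x' ++ [] := by
        rw [List.append_nil]; exact (heq.trans hx'').symm
      exact List.append_cancel_left this
    · simp only [Set.mem_range] at h
      simp [hg, h] at hw
  have hgpf : CondPF sd g := by
    intro x' a ha b hb _
    rw [key x' a ha, key x' b hb]
  obtain ⟨p, _, hp⟩ := V.univ g hgp hgpf
  refine ⟨p, ?_⟩
  have := hp x []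
  simp only [List.append_nil] at this
  rw [this, hg]
  simp [Set.mem_range.2 ⟨x, rfl⟩]


lemma exists_large_KV {α : Type} [Primcodable α] [Finite α] [Nonempty α]
    {sd : SelfDelim α} (V : UnivCondPF sd) (x : List α) (n : ℕ) :
    ∃ y : List α, n ≤ KV V y x := by
  by_contra h
  push_neg at h
  have hne : ∀ y : List α,
      {m | ∃ p : List α, p.length = m ∧ V.V (sd.enc x ++ p) = Part.some y}.Nonempty := by
    intro y
    obtain ⟨p, hp⟩ := exists_prog V y x
    exact ⟨p.length, p, rfl, hp⟩
  choose w hw hV using fun y => (Nat.sInf_mem (hne y) :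
    ∃ p : List α, p.length = KV V y x ∧ V.V (sd.enc x ++ p) = Part.some y)
  have hinj : Function.Injective w := by
    intro y₁ y₂ hyy
    have := (hV y₁).symm.trans (hyy ▸ hV y₂)
    exact (Part.some_inj.1 this)
  have : (Set.univ : Set (List α)).Finite := by
    have hsub : Set.univ ⊆ w ⁻¹' {p : List α | p.length < n} := by
      intro y _
      simp only [Set.mem_preimage, Set.mem_setOf_eq, hw y]
      exact h y
    exact Set.Finite.subset ((List.finite_length_lt α n).preimage
      (Set.injOn_of_injective hinj)) hsub
  exact Set.infinite_univ this


/-- **The expected conditional prefix-free complexity can exceed the conditional entropy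
by any amount.** Conditional entropy and expectation are taken in `ℝ≥0∞`; the conditional
probability of `y` given `x` under `P` is `P (x,y) / ∑' y', P (x,y')`. -/
theorem expected_complexity_exceeds_entropy
    (α : Type) [Primcodable α] [Fintype α] (hα : 2 ≤ Fintype.card α)
    (sd : SelfDelim α) (V : UnivCondPF sd) :
    ∀ n : ℕ, ∃ P : List α × List α → ℝ,
      (∀ z, 0 ≤ P z) ∧ HasSum P 1 ∧
      (∑' z : List α × List α, ENNReal.ofReal (P z) *
          ENNReal.ofReal (-(Real.logb (Fintype.card α : ℝ)
            (P z / ∑' y : List α, P (z.1, y)))))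
        + (n : ℝ≥0∞)
      ≤ ∑' z : List α × List α, ENNReal.ofReal (P z) * (KV V z.2 z.1 : ℝ≥0∞) := by
  intro n
  have : Nonempty α := Fintype.card_pos_iff.mp (by omega)
  obtain ⟨y₀, hy₀⟩ := exists_large_KV V ([] : List α) n
  set z₀ : List α × List α := ([], y₀) with hz₀
  refine ⟨fun z => if z = z₀ then 1 else 0, ?_, ?_, ?_⟩
  · intro z; dsimp only; split <;> norm_num
  · exact hasSum_ite_eq z₀ 1
  · have hmarg : (∑' y : List α, (if ((([] : List α), y) : List α × List α) = z₀
        then (1:ℝ) else 0)) = 1 := by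
      have : ∀ y : List α, (if ((([] : List α), y) : List α × List α) = z₀
          then (1:ℝ) else 0) = if y = y₀ then 1 else 0 := by
        intro y; simp [hz₀, Prod.ext_iff]
      rw [tsum_congr this]
      exact tsum_ite_eq y₀ (fun _ => (1:ℝ))
    have hent : (∑' z : List α × List α, ENNReal.ofReal (if z = z₀ then (1:ℝ) else 0) *
        ENNReal.ofReal (-(Real.logb (Fintype.card α : ℝ)
          ((if z = z₀ then (1:ℝ) else 0) / ∑' y : List α,
            (if ((z.1, y) : List α × List α) = z₀ then (1:ℝ) else 0)))) ) = 0 := by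
      refine (tsum_congr fun z => ?_).trans tsum_zero
      by_cases hz : z = z₀
      · subst hz
        rw [if_pos rfl]
        have : (∑' y : List α, (if ((z₀.1, y) : List α × List α) = z₀
            then (1:ℝ) else 0)) = 1 := hmarg
        rw [this]
        norm_num
      · rw [if_neg hz]
        simp
    rw [hent, zero_add]
    have hle : ENNReal.ofReal (if z₀ = z₀ then (1:ℝ) else 0) * (KV V z₀.2 z₀.1 : ℝ≥0∞)
        ≤ ∑' z : List α × List α, ENNReal.ofReal (if z = z₀ then (1:ℝ) else 0) *
          (KV V z.2 z.1 : ℝ≥0∞) := ENNReal.le_tsum z₀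
    refine le_trans ?_ hle
    rw [if_pos rfl]
    simp only [ENNReal.ofReal_one, one_mul, hz₀]
    exact_mod_cast hy₀

end Quad
end

section
/- Kullback–Leibler divergence bound for a two-point perturbation of a probability mass function: Let b ≥ 2 be an integer, let Y be an at most countable set, let q : Y → (0,1] be a probability mass function with full support (∑_{y∈Y} q(y) = 1 and q(y) > 0 for all y), let η, η' ∈ Y be distinct, and let δ be a real number with 0 < δ < q(η'). Define p : Y → ℝ by p(y) := q(y) for y ∉ {η, η'}, p(η) := q(η) + δ, and p(η') := q(η') − δ. Then p is a probability mass function, and D_KL(p‖q) := ∑_{y∈Y} p(y)·log_b(p(y)/q(y)) satisfies D_KL(p‖q) ≤ (δ²/ln b)·(1/q(η) + 1/q(η')). -/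
open scoped Classical ENNReal NNReal

namespace Quad

/-- **Kullback–Leibler divergence bound for a two-point perturbation of a probability
mass function.** -/
theorem kl_bound_two_point_perturbation
    (b : ℕ) (hb : 2 ≤ b)
    (Y : Type) [Countable Y]
    (q : Y → ℝ) (hq0 : ∀ y, 0 < q y) (hq1le : ∀ y, q y ≤ 1) (hq1 : HasSum q 1)
    (η η' : Y) (hne : η ≠ η')
    (δ : ℝ) (hδ0 : 0 < δ) (hδ : δ < q η')
    (p : Y → ℝ)
    (hp : ∀ y, p y = if y = η then q η + δ else if y = η' then q η' - δ else q y) :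
    (∀ y, 0 ≤ p y) ∧ HasSum p 1 ∧
    (∑' y : Y, p y * Real.logb (b : ℝ) (p y / q y))
      ≤ δ ^ 2 / Real.log (b : ℝ) * (1 / q η + 1 / q η') := by
  have hb1 : (1 : ℝ) < b := by exact_mod_cast lt_of_lt_of_le one_lt_two hb
  have hlogb : 0 < Real.log b := Real.log_pos hb1
  have hA : 0 < q η := hq0 η
  have hB : 0 < q η' := hq0 η'
  have hAδ : 0 < q η + δ := by linarith
  have hBδ : 0 < q η' - δ := by linarith
  have hpη : p η = q η + δ := by rw [hp]; simp
  have hpη' : p η' = q η' - δ := by rw [hp]; simp [Ne.symm hne]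
  have hpother : ∀ y, y ≠ η → y ≠ η' → p y = q y := by
    intro y h1 h2; rw [hp]; simp [h1, h2]
  have hpnn : ∀ y, 0 ≤ p y := by
    intro y
    by_cases h1 : y = η
    · subst h1; rw [hpη]; linarith
    by_cases h2 : y = η'
    · subst h2; rw [hpη']; linarith
    · rw [hpother y h1 h2]; exact (hq0 y).le
  refine ⟨hpnn, ?_, ?_⟩
  · have hg : HasSum (fun y => (if y = η then δ else 0) + (if y = η' then -δ else 0))
        (δ + -δ) := (hasSum_ite_eq η δ).add (hasSum_ite_eq η' (-δ))
    have hsum := hq1.add hg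
    have hfun : (fun y => q y + ((if y = η then δ else 0) + (if y = η' then -δ else 0))) = p := by
      funext y
      rw [hp]
      by_cases h1 : y = η
      · subst h1; simp [hne]
      by_cases h2 : y = η'
      · subst h2; simp [h1]; ring
      · simp [h1, h2]
    rw [hfun] at hsum
    simpa using hsum
  · set f : Y → ℝ := fun y => p y * Real.logb (b : ℝ) (p y / q y) with hf
    have hzero : ∀ y ∉ ({η, η'} : Finset Y), f y = 0 := by
      intro y hy
      simp only [Finset.mem_insert, Finset.mem_singleton, not_or] at hy
      simp [hf, hpother y hy.1 hy.2, div_self (hq0 y).ne']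
    have htsum : (∑' y : Y, f y) = f η + f η' := by
      rw [tsum_eq_sum hzero, Finset.sum_pair hne]
    rw [htsum]
    have h1 : Real.log ((q η + δ) / q η) ≤ δ / q η := by
      have := Real.log_le_sub_one_of_pos (div_pos hAδ hA)
      have heq : (q η + δ) / q η - 1 = δ / q η := by field_simp; ring
      linarith [heq ▸ this]
    have h2 : Real.log ((q η' - δ) / q η') ≤ -δ / q η' := by
      have := Real.log_le_sub_one_of_pos (div_pos hBδ hB)
      have heq : (q η' - δ) / q η' - 1 = -δ / q η' := by field_simp; ring
      linarith [heq ▸ this]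
    have e1 : (q η + δ) * Real.log ((q η + δ) / q η) ≤ (q η + δ) * (δ / q η) :=
      mul_le_mul_of_nonneg_left h1 hAδ.le
    have e2 : (q η' - δ) * Real.log ((q η' - δ) / q η') ≤ (q η' - δ) * (-δ / q η') :=
      mul_le_mul_of_nonneg_left h2 hBδ.le
    have hcomb : (q η + δ) * (δ / q η) + (q η' - δ) * (-δ / q η')
        = δ ^ 2 * (1 / q η + 1 / q η') := by
      field_simp; ring
    have key : (q η + δ) * Real.log ((q η + δ) / q η)
        + (q η' - δ) * Real.log ((q η' - δ) / q η')
        ≤ δ ^ 2 * (1 / q η + 1 / q η') := by linarith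
    have hfη : f η = (q η + δ) * (Real.log ((q η + δ) / q η) / Real.log b) := by
      simp [hf, hpη, Real.logb]
    have hfη' : f η' = (q η' - δ) * (Real.log ((q η' - δ) / q η') / Real.log b) := by
      simp [hf, hpη', Real.logb]
    rw [hfη, hfη']
    have hrw : (q η + δ) * (Real.log ((q η + δ) / q η) / Real.log b)
        + (q η' - δ) * (Real.log ((q η' - δ) / q η') / Real.log b)
        = ((q η + δ) * Real.log ((q η + δ) / q η)
          + (q η' - δ) * Real.log ((q η' - δ) / q η')) / Real.log b := by ring
    have hrw2 : δ ^ 2 / Real.log (b : ℝ) * (1 / q η + 1 / q η')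
        = (δ ^ 2 * (1 / q η + 1 / q η')) / Real.log b := by ring
    rw [hrw, hrw2]
    exact (div_le_div_iff_of_pos_right hlogb).mpr key

end Quad
end
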